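/- Let x₁ < x₄ be real numbers and suppose S₀₀ is a finite nonempty set of points x ∈ (x₁, x₄] together with positive idle times I(x), such that [x₁, x₄] = ⋂_{x ∈ S₀₀} [x − I(x)/2, x + I(x)/2]. If x₃ denotes the maximum of S₀₀, then x₄ − x₃ ≤ x₃ − x₁. -/

import Mathlib

theorem stmt10 (x₁ x₄ : ℝ) (h14 : x₁ < x₄) (S : Finset ℝ) (hS : S.Nonempty)
    (I : ℝ → ℝ) (hIpos : ∀ x ∈ S, 0 < I x)
    (hSsub : ∀ x ∈ S, x ∈ Set.Ioc x₁ x₄)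
    (hinter : Set.Icc x₁ x₄ = ⋂ x ∈ S, Set.Icc (x - I x / 2) (x + I x / 2)) :
    x₄ - S.max' hS ≤ S.max' hS - x₁ := by
  have hmem : ∀ y ∈ Set.Icc x₁ x₄, ∀ x ∈ S, y ∈ Set.Icc (x - I x / 2) (x + I x / 2) := by
    intro y hy x hx
    rw [hinter] at hy
    exact Set.mem_iInter₂.mp hy x hx
  have hb : ∀ x ∈ S, x₄ ≤ x + I x / 2 := fun x hx =>
    (hmem x₄ ⟨le_of_lt h14, le_refl _⟩ x hx).2
  by_cases H : ∃ x ∈ S, x₁ ≤ x - I x / 2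
  · obtain ⟨x₀, hx₀S, hx₀⟩ := H
    have h1 : x₀ ≤ S.max' hS := S.le_max' x₀ hx₀S
    have h2 := hb x₀ hx₀S
    linarith [hIpos x₀ hx₀S]
  · push_neg at H
    obtain ⟨a, haS, ha⟩ := S.exists_max_image (fun x => x - I x / 2) hS
    have hax : a - I a / 2 < x₁ := H a haS
    set y := (a - I a / 2 + x₁) / 2 with hy
    have hy1 : y < x₁ := by rw [hy]; linarith
    have hy2 : y ∈ Set.Icc x₁ x₄ := by
      rw [hinter]
      refine Set.mem_iInter₂.mpr fun x hx => ⟨?_, ?_⟩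
      · have := ha x hx
        rw [hy]; linarith
      · have hbx := hb x hx
        rw [hy]; linarith
    exact absurd hy2.1 (not_le.mpr hy1)
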